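/- The partial matching (A, B, C, m) produced by Algorithm 2 is acyclic: the modified Hasse diagram of S, obtained from the Hasse diagram by reversing edges (m(σ), σ) for σ ∈ A, contains no nontrivial directed cycle. -/

import Mathlib

open Classical in
/-- The lower link of a vertex `v` in the simplicial complex `K` with respect to the
vertex map `f : V → ℝ^k`: the simplices `τ` with `v * τ ∈ K` and `f w ⪵ f v` for every
vertex `w` of `τ` (⪵ being the strict componentwise order). -/
noncomputable def lowerLink {V : Type*} [DecidableEq V] {k : ℕ}
    (K : Finset (Finset V)) (f : V → Fin k → ℝ) (v : V) : Finset (Finset V) :=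
  K.filter fun τ => v ∉ τ ∧ insert v τ ∈ K ∧ ∀ w ∈ τ, f w ≤ f v ∧ f w ≠ f v

theorem lowerLink_card_lt {V : Type*} [DecidableEq V] {k : ℕ}
    (K : Finset (Finset V)) (f : V → Fin k → ℝ) (v : V)
    (h : (lowerLink K f v).Nonempty) : (lowerLink K f v).card < K.card := by
  classical
  have hsub : lowerLink K f v ⊆ K := by
    simp [lowerLink]
  obtain ⟨τ, hτ⟩ := h
  have hmem : τ ∈ K ∧ v ∉ τ ∧ insert v τ ∈ K ∧ ∀ w ∈ τ, f w ≤ f v ∧ f w ≠ f v := by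
    simpa [lowerLink] using hτ
  apply Finset.card_lt_card
  rw [Finset.ssubset_iff_of_subset hsub]
  refine ⟨insert v τ, hmem.2.2.1, fun hc => ?_⟩
  have hvc : v ∉ insert v τ := by
    simp only [lowerLink, Finset.mem_filter] at hc
    exact hc.2.1
  exact hvc (Finset.mem_insert_self v τ)

/-- The output of the matching algorithm (Algorithm 2): the lists `A`, `B` of matched
simplices and the matching map `m : A → B`. -/
structure MatchOut (V : Type*) [DecidableEq V] where
  A : Finset (Finset V)
  B : Finset (Finset V)
  m : Finset V → Finset V

open Classical in
/-- Algorithm 2 (the recursive lower-link matching algorithm). For every vertex `v` of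
`K` whose lower link is nonempty: recursively partition the lower link, pick the
vertex `w₀` of the critical part of the lower link with `f`-value minimal w.r.t. ⪵
and smallest index `I`, match `v` with the edge `{v, w₀}`, and match `v * σ` with
`v * m' σ` for every `σ` matched in the lower link. All other simplices are critical,
i.e. the critical set is `C = K \ (A ∪ B)`. -/
noncomputable def algMatch {V : Type*} [DecidableEq V] [Fintype V] {k : ℕ}
    (f : V → Fin k → ℝ) (I : V → ℕ) (K : Finset (Finset V)) : MatchOut V :=
  let sub : V → MatchOut V := fun v =>
    if h : (lowerLink K f v).Nonempty then algMatch f I (lowerLink K f v)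
    else ⟨∅, ∅, fun _ => ∅⟩
  let w0 : V → V := fun v =>
    let o := sub v
    let C' := lowerLink K f v \ (o.A ∪ o.B)
    let C0 : Finset V := Finset.univ.filter fun w => ({w} : Finset V) ∈ C'
    let D' := C0.filter fun w => ∀ u ∈ C0, ¬(f u ≤ f w ∧ f u ≠ f w)
    if hD : D'.Nonempty then (Finset.exists_min_image D' I hD).choose else v
  let Av : Finset V := Finset.univ.filter fun v =>
    ({v} : Finset V) ∈ K ∧ (lowerLink K f v).Nonempty
  ⟨Av.image (fun v => ({v} : Finset V)) ∪
      Av.biUnion (fun v => ((sub v).A).image fun σ => insert v σ),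
    Av.image (fun v => ({v, w0 v} : Finset V)) ∪
      Av.biUnion (fun v => ((sub v).A).image fun σ => insert v ((sub v).m σ)),
    fun τ =>
      if hτ : τ.Nonempty then
        let v := (Finset.exists_max_image τ I hτ).choose
        if τ = {v} then {v, w0 v}
        else insert v ((sub v).m (τ.erase v))
      else ∅⟩
termination_by K.card
decreasing_by exact lowerLink_card_lt K f _ h

section Aux
variable {V : Type*} [DecidableEq V] [Fintype V] {k : ℕ}

open Classical in
lemma memA_iff (f : V → Fin k → ℝ) (I : V → ℕ) (K : Finset (Finset V)) (σ : Finset V) :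
    σ ∈ (algMatch f I K).A ↔ ∃ v, ({v} : Finset V) ∈ K ∧ (lowerLink K f v).Nonempty ∧
      (σ = {v} ∨ ∃ τ ∈ (algMatch f I (lowerLink K f v)).A, σ = insert v τ) := by
  rw [algMatch]
  simp only [Finset.mem_union, Finset.mem_image, Finset.mem_biUnion, Finset.mem_filter,
    Finset.mem_univ, true_and]
  constructor
  · rintro (⟨v, ⟨h1, h2⟩, rfl⟩ | ⟨v, ⟨h1, h2⟩, τ, hτ, rfl⟩)
    · exact ⟨v, h1, h2, Or.inl rfl⟩
    · rw [dif_pos h2] at hτ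
      exact ⟨v, h1, h2, Or.inr ⟨τ, hτ, rfl⟩⟩
  · rintro ⟨v, h1, h2, (rfl | ⟨τ, hτ, rfl⟩)⟩
    · exact Or.inl ⟨v, ⟨h1, h2⟩, rfl⟩
    · exact Or.inr ⟨v, ⟨h1, h2⟩, τ, by rw [dif_pos h2]; exact hτ, rfl⟩

open Classical in
noncomputable def algW (f : V → Fin k → ℝ) (I : V → ℕ) (K : Finset (Finset V)) (v : V) : V :=
  let o := if h : (lowerLink K f v).Nonempty then algMatch f I (lowerLink K f v)
    else ⟨∅, ∅, fun _ => ∅⟩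
  let C' := lowerLink K f v \ (o.A ∪ o.B)
  let C0 : Finset V := Finset.univ.filter fun w => ({w} : Finset V) ∈ C'
  let D' := C0.filter fun w => ∀ u ∈ C0, ¬(f u ≤ f w ∧ f u ≠ f w)
  if hD : D'.Nonempty then (Finset.exists_min_image D' I hD).choose else v

open Classical in
lemma algMatch_m (f : V → Fin k → ℝ) (I : V → ℕ) (hI : Function.Injective I)
    (K : Finset (Finset V))
    (σ : Finset V) (hσ : σ.Nonempty) (v : V) (hv : v ∈ σ) (hmax : ∀ w ∈ σ, I w ≤ I v) :
    (algMatch f I K).m σ = if σ = {v} then ({v, algW f I K v} : Finset V)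
      else insert v ((if h : (lowerLink K f v).Nonempty then algMatch f I (lowerLink K f v)
        else ⟨∅, ∅, fun _ => ∅⟩ : MatchOut V).m (σ.erase v)) := by
  have hc : (Finset.exists_max_image σ I hσ).choose = v := by
    obtain ⟨h1, h2⟩ := (Finset.exists_max_image σ I hσ).choose_spec
    exact hI (le_antisymm (hmax _ h1) (h2 v hv))
  rw [algMatch]
  dsimp only
  rw [dif_pos hσ]
  simp only [hc, algW]

open Classical in
lemma dite_min_helper (I : V → ℕ) (D : Finset V) (v : V) (P : V → Prop)
    (h1 : P v) (h2 : ∀ u ∈ D, P u) :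
    P (if hD : D.Nonempty then (Finset.exists_min_image D I hD).choose else v) := by
  split
  · next hD => exact h2 _ (Finset.exists_min_image D I hD).choose_spec.1
  · exact h1

lemma algW_spec (f : V → Fin k → ℝ) (I : V → ℕ) (K : Finset (Finset V)) (v : V) :
    algW f I K v = v ∨ ({algW f I K v} : Finset V) ∈ lowerLink K f v := by
  unfold algW
  dsimp only
  apply dite_min_helper I _ v
    (fun u => u = v ∨ ({u} : Finset V) ∈ lowerLink K f v) (Or.inl rfl)
  intro u hu
  refine Or.inr ?_
  simp only [Finset.mem_filter] at hu
  have h2 := hu.1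
  exact (Finset.mem_sdiff.mp h2.2).1

lemma lowerLink_vert {f : V → Fin k → ℝ} {K : Finset (Finset V)} {v w : V} {τ : Finset V}
    (hτ : τ ∈ lowerLink K f v) (hw : w ∈ τ) :
    (f w ≤ f v ∧ f w ≠ f v) ∧ w ≠ v := by
  classical
  simp only [lowerLink, Finset.mem_filter] at hτ
  exact ⟨hτ.2.2.2 w hw, fun h => hτ.2.1 (h ▸ hw)⟩

lemma lowerLink_subset (K : Finset (Finset V)) (f : V → Fin k → ℝ) (v : V) :
    lowerLink K f v ⊆ K := by
  classical
  intro τ hτ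
  simp only [lowerLink, Finset.mem_filter] at hτ
  exact hτ.1

lemma vertA (f : V → Fin k → ℝ) (I : V → ℕ) :
    ∀ n (L : Finset (Finset V)), L.card ≤ n →
      ∀ σ ∈ (algMatch f I L).A, ∀ w ∈ σ, ∃ τ ∈ L, w ∈ τ := by
  intro n
  induction n with
  | zero =>
    intro L hL σ hσ w hw
    rw [memA_iff] at hσ
    obtain ⟨v, hvK, -, -⟩ := hσ
    have : 0 < L.card := Finset.card_pos.mpr ⟨_, hvK⟩
    omega
  | succ n ih =>
    intro L hL σ hσ w hw
    rw [memA_iff] at hσ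
    obtain ⟨v, hvK, hvne, (rfl | ⟨τ, hτ, rfl⟩)⟩ := hσ
    · exact ⟨{v}, hvK, hw⟩
    · rcases Finset.mem_insert.mp hw with rfl | hw'
      · exact ⟨{w}, hvK, Finset.mem_singleton_self w⟩
      · have hcard : (lowerLink L f v).card ≤ n :=
          Nat.lt_succ_iff.mp (lt_of_lt_of_le (lowerLink_card_lt L f v hvne) hL)
        obtain ⟨ρ, hρ, hwρ⟩ := ih _ hcard τ hτ w hw'
        exact ⟨ρ, lowerLink_subset L f v hρ, hwρ⟩

lemma keyA (f : V → Fin k → ℝ) (I : V → ℕ)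
    (hcomp : ∀ v w : V, f v ≤ f w → f v ≠ f w → I v < I w)
    {K : Finset (Finset V)} {σ : Finset V} (hσ : σ ∈ (algMatch f I K).A) :
    ∃ v, v ∈ σ ∧ (∀ w ∈ σ, I w ≤ I v) ∧ ({v} : Finset V) ∈ K ∧
      (lowerLink K f v).Nonempty ∧
      (σ = {v} ∨ (σ.erase v) ∈ (algMatch f I (lowerLink K f v)).A) := by
  rw [memA_iff] at hσ
  obtain ⟨v, hvK, hvne, (rfl | ⟨τ, hτ, rfl⟩)⟩ := hσ
  · exact ⟨v, Finset.mem_singleton_self v, fun w hw => by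
      rw [Finset.mem_singleton] at hw; rw [hw], hvK, hvne, Or.inl rfl⟩
  · have hvert : ∀ w ∈ τ, (f w ≤ f v ∧ f w ≠ f v) ∧ w ≠ v := by
      intro w hw
      obtain ⟨ρ, hρ, hwρ⟩ := vertA f I (lowerLink K f v).card _ le_rfl τ hτ w hw
      exact lowerLink_vert hρ hwρ
    have hvτ : v ∉ τ := fun h => (hvert v h).2 rfl
    refine ⟨v, Finset.mem_insert_self v τ, ?_, hvK, hvne, Or.inr ?_⟩
    · intro w hw
      rcases Finset.mem_insert.mp hw with rfl | hw'
      · exact le_rfl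
      · exact le_of_lt (hcomp w v (hvert w hw').1.1 (hvert w hw').1.2)
    · rw [Finset.erase_insert hvτ]
      exact hτ

lemma Mlem (f : V → Fin k → ℝ) (I : V → ℕ) (hI : Function.Injective I)
    (hcomp : ∀ v w : V, f v ≤ f w → f v ≠ f w → I v < I w) :
    ∀ n (L : Finset (Finset V)), L.card ≤ n → ∀ σ ∈ (algMatch f I L).A,
      σ ⊆ (algMatch f I L).m σ ∧ (∀ w ∈ (algMatch f I L).m σ, ∃ τ ∈ L, w ∈ τ) ∧
        ((algMatch f I L).m σ).card ≤ σ.card + 1 := by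
  intro n
  induction n with
  | zero =>
    intro L hL σ hσ
    rw [memA_iff] at hσ
    obtain ⟨v, hvK, -, -⟩ := hσ
    have : 0 < L.card := Finset.card_pos.mpr ⟨_, hvK⟩
    omega
  | succ n ih =>
    intro L hL σ hσ
    obtain ⟨v, hv, hmax, hvK, hvne, hcase⟩ := keyA f I hcomp hσ
    have hm := algMatch_m f I hI L σ ⟨v, hv⟩ v hv hmax
    rcases hcase with hsing | herase
    · rw [hm, if_pos hsing]
      refine ⟨?_, ?_, ?_⟩
      · rw [hsing]
        intro w hw
        rw [Finset.mem_singleton] at hw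
        rw [hw]; exact Finset.mem_insert_self _ _
      · intro w hw
        rcases Finset.mem_insert.mp hw with rfl | hw'
        · exact ⟨{w}, hvK, Finset.mem_singleton_self w⟩
        · rw [Finset.mem_singleton] at hw'
          rcases algW_spec f I L v with hWv | hWl
          · rw [hw', hWv]; exact ⟨{v}, hvK, Finset.mem_singleton_self v⟩
          · rw [hw']
            exact ⟨_, lowerLink_subset L f v hWl, Finset.mem_singleton_self _⟩
      · calc ({v, algW f I L v} : Finset V).card ≤ ({algW f I L v} : Finset V).card + 1 :=
              Finset.card_insert_le _ _
          _ ≤ σ.card + 1 := by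
              rw [Finset.card_singleton, hsing, Finset.card_singleton]
    · have hσne : σ ≠ {v} := by
        rintro rfl
        obtain ⟨u, hu, -⟩ := keyA f I hcomp herase
        rw [Finset.erase_singleton] at hu
        exact absurd hu (Finset.notMem_empty u)
      rw [hm, if_neg hσne, dif_pos hvne]
      have hcard' : (lowerLink L f v).card ≤ n :=
        Nat.lt_succ_iff.mp (lt_of_lt_of_le (lowerLink_card_lt L f v hvne) hL)
      obtain ⟨ih1, ih2, ih3⟩ := ih _ hcard' _ herase
      refine ⟨?_, ?_, ?_⟩
      · intro w hw
        rcases eq_or_ne w v with rfl | hwv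
        · exact Finset.mem_insert_self _ _
        · exact Finset.mem_insert_of_mem (ih1 (Finset.mem_erase.mpr ⟨hwv, hw⟩))
      · intro w hw
        rcases Finset.mem_insert.mp hw with rfl | hw'
        · exact ⟨{w}, hvK, Finset.mem_singleton_self w⟩
        · obtain ⟨τ, hτ, hwτ⟩ := ih2 w hw'
          exact ⟨τ, lowerLink_subset L f v hτ, hwτ⟩
      · calc (insert v ((algMatch f I (lowerLink L f v)).m (σ.erase v))).card
            ≤ ((algMatch f I (lowerLink L f v)).m (σ.erase v)).card + 1 :=
              Finset.card_insert_le _ _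
          _ ≤ ((σ.erase v).card + 1) + 1 := by omega
          _ = σ.card + 1 := by rw [Finset.card_erase_add_one hv]

lemma maxI_m (f : V → Fin k → ℝ) (I : V → ℕ) (hI : Function.Injective I)
    (hcomp : ∀ v w : V, f v ≤ f w → f v ≠ f w → I v < I w)
    {K : Finset (Finset V)} {σ : Finset V} (hσ : σ ∈ (algMatch f I K).A)
    {v : V} (hv : v ∈ σ) (hmax : ∀ w ∈ σ, I w ≤ I v) :
    ∀ w ∈ (algMatch f I K).m σ, I w ≤ I v := by
  obtain ⟨v₀, hv₀, hmax₀, hvK, hvne, hcase⟩ := keyA f I hcomp hσ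
  have hvv : v₀ = v := hI (le_antisymm (hmax _ hv₀) (hmax₀ _ hv))
  subst hvv
  have hm := algMatch_m f I hI K σ ⟨v₀, hv₀⟩ v₀ hv₀ hmax₀
  intro w hw
  rcases hcase with hsing | herase
  · rw [hm, if_pos hsing] at hw
    rcases Finset.mem_insert.mp hw with rfl | hw'
    · exact le_rfl
    · rw [Finset.mem_singleton] at hw'
      subst hw'
      rcases algW_spec f I K v₀ with hWv | hWl
      · rw [hWv]
      · exact le_of_lt (hcomp _ _ ((lowerLink_vert hWl (Finset.mem_singleton_self _)).1.1)
          ((lowerLink_vert hWl (Finset.mem_singleton_self _)).1.2))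
  · have hσne : σ ≠ {v₀} := by
      rintro rfl
      obtain ⟨u, hu, -⟩ := keyA f I hcomp herase
      rw [Finset.erase_singleton] at hu
      exact absurd hu (Finset.notMem_empty u)
    rw [hm, if_neg hσne, dif_pos hvne] at hw
    rcases Finset.mem_insert.mp hw with rfl | hw'
    · exact le_rfl
    · obtain ⟨τ, hτ, hwτ⟩ :=
        (Mlem f I hI hcomp (lowerLink K f v₀).card _ le_rfl _ herase).2.1 w hw'
      exact le_of_lt (hcomp _ _ (lowerLink_vert hτ hwτ).1.1 (lowerLink_vert hτ hwτ).1.2)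

end Aux

section Main
variable {V : Type*} [DecidableEq V] [Fintype V] {k : ℕ}

lemma auxMain (f : V → Fin k → ℝ) (I : V → ℕ) (hI : Function.Injective I)
    (hcomp : ∀ v w : V, f v ≤ f w → f v ≠ f w → I v < I w) :
    ∀ n (K : Finset (Finset V)), K.card ≤ n →
    ¬ ∃ (p : ℕ) (σ : ℕ → Finset V), (∀ i ≤ p, σ i ∈ (algMatch f I K).A) ∧
        σ (p + 1) = σ 0 ∧
        ∀ i ≤ p, σ (i + 1) ≠ σ i ∧ σ (i + 1) ⊆ (algMatch f I K).m (σ i) ∧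
          (σ (i + 1)).card + 1 = ((algMatch f I K).m (σ i)).card := by
  intro n
  induction n with
  | zero =>
    rintro K hK ⟨p, σ, hA, -, -⟩
    obtain ⟨v, -, -, hvK, -, -⟩ := keyA f I hcomp (hA 0 (Nat.zero_le p))
    have : 0 < K.card := Finset.card_pos.mpr ⟨_, hvK⟩
    omega
  | succ n ih =>
    rintro K hK ⟨p, σ, hA, hloop, hstep⟩
    have hA' : ∀ i ≤ p + 1, σ i ∈ (algMatch f I K).A := by
      intro i hi
      rcases Nat.lt_or_ge i (p + 1) with h | h
      · exact hA i (Nat.lt_succ_iff.mp h)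
      · have hip : i = p + 1 := le_antisymm hi h
        rw [hip, hloop]
        exact hA 0 (Nat.zero_le p)
    obtain ⟨v0, -⟩ := keyA f I hcomp (hA 0 (Nat.zero_le p))
    have hex : ∀ i, ∃ v, i ≤ p + 1 →
        v ∈ σ i ∧ (∀ w ∈ σ i, I w ≤ I v) ∧ ({v} : Finset V) ∈ K ∧
        (lowerLink K f v).Nonempty ∧
        (σ i = {v} ∨ (σ i).erase v ∈ (algMatch f I (lowerLink K f v)).A) := by
      intro i
      by_cases hi : i ≤ p + 1
      · obtain ⟨v, hv⟩ := keyA f I hcomp (hA' i hi)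
        exact ⟨v, fun _ => hv⟩
      · exact ⟨v0, fun h => absurd h hi⟩
    choose vtx hvtx using hex
    have hdec : ∀ i ≤ p, I (vtx (i + 1)) ≤ I (vtx i) := by
      intro i hi
      have h1 := hvtx i (le_trans hi (Nat.le_succ p))
      have h2 := hvtx (i + 1) (Nat.succ_le_succ hi)
      exact maxI_m f I hI hcomp (hA i hi) h1.1 h1.2.1 _ ((hstep i hi).2.1 h2.1)
    have hmono : ∀ j ≤ p + 1, ∀ i ≤ j, I (vtx j) ≤ I (vtx i) := by
      intro j
      induction j with
      | zero =>
        intro _ i hi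
        have : i = 0 := Nat.le_zero.mp hi
        rw [this]
      | succ j ihj =>
        intro hj i hi
        rcases Nat.eq_or_lt_of_le hi with rfl | h
        · exact le_rfl
        · exact le_trans (hdec j (Nat.succ_le_succ_iff.mp hj))
            (ihj (le_trans (Nat.le_succ j) hj) i (Nat.lt_succ_iff.mp h))
    have hconst : ∀ i ≤ p + 1, vtx i = vtx 0 := by
      intro i hi
      have h0 := hvtx 0 (Nat.zero_le _)
      have hp := hvtx (p + 1) le_rfl
      rw [hloop] at hp
      have e1 : I (vtx (p + 1)) = I (vtx 0) :=
        le_antisymm (h0.2.1 _ hp.1) (hp.2.1 _ h0.1)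
      refine hI (le_antisymm (hmono i hi 0 (Nat.zero_le i)) ?_)
      calc I (vtx 0) = I (vtx (p + 1)) := e1.symm
        _ ≤ I (vtx i) := hmono (p + 1) le_rfl i hi
    set v := vtx 0 with hv0
    have hvmem : ∀ i ≤ p + 1, v ∈ σ i := by
      intro i hi
      have h := (hvtx i hi).1
      rwa [hconst i hi] at h
    have hvmax : ∀ i ≤ p + 1, ∀ w ∈ σ i, I w ≤ I v := by
      intro i hi
      have h := (hvtx i hi).2.1
      rwa [hconst i hi] at h
    have hL'ne : (lowerLink K f v).Nonempty := (hvtx 0 (Nat.zero_le _)).2.2.2.1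
    have hok : ∀ j ≤ p, σ j ≠ {v} := by
      intro j hj hsing
      have hmemj : v ∈ σ j := hvmem j (le_trans hj (Nat.le_succ p))
      have hmaxj := hvmax j (le_trans hj (Nat.le_succ p))
      have hmemj1 : v ∈ σ (j + 1) := hvmem (j + 1) (Nat.succ_le_succ hj)
      obtain ⟨hnej, hsubj, hcardj⟩ := hstep j hj
      have hm := algMatch_m f I hI K (σ j) ⟨v, hmemj⟩ v hmemj hmaxj
      rw [if_pos hsing] at hm
      rcases algW_spec f I K v with hWv | hWl
      · rw [hWv, Finset.insert_eq_self.mpr (Finset.mem_singleton_self v)] at hm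
        rw [hm, Finset.card_singleton] at hcardj
        have : 0 < (σ (j + 1)).card := Finset.card_pos.mpr ⟨v, hmemj1⟩
        omega
      · have hWne : algW f I K v ≠ v := (lowerLink_vert hWl (Finset.mem_singleton_self _)).2
        have hc2 : ({v, algW f I K v} : Finset V).card = 2 := by
          rw [Finset.card_insert_of_notMem (Finset.notMem_singleton.mpr hWne.symm),
            Finset.card_singleton]
        rw [hm, hc2] at hcardj
        have hone : (σ (j + 1)).card = 1 := by omega
        obtain ⟨a, ha⟩ := Finset.card_eq_one.mp hone
        rw [ha] at hmemj1
        rw [Finset.mem_singleton] at hmemj1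
        apply hnej
        rw [ha, ← hmemj1, hsing]
    have herase : ∀ i ≤ p + 1, (σ i).erase v ∈ (algMatch f I (lowerLink K f v)).A := by
      intro i hi
      have h := (hvtx i hi).2.2.2.2
      rw [hconst i hi] at h
      rcases h with hs | h'
      · exfalso
        rcases Nat.lt_or_ge i (p + 1) with hlt | hge
        · exact hok i (Nat.lt_succ_iff.mp hlt) hs
        · have hip : i = p + 1 := le_antisymm hi hge
          rw [hip, hloop] at hs
          exact hok 0 (Nat.zero_le p) hs
      · exact h'
    have hmEq : ∀ i ≤ p, (algMatch f I K).m (σ i) =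
        insert v ((algMatch f I (lowerLink K f v)).m ((σ i).erase v)) := by
      intro i hi
      have hmemi : v ∈ σ i := hvmem i (le_trans hi (Nat.le_succ p))
      have h := algMatch_m f I hI K (σ i) ⟨v, hmemi⟩ v hmemi
        (hvmax i (le_trans hi (Nat.le_succ p)))
      rwa [if_neg (hok i hi), dif_pos hL'ne] at h
    have hvnotm : ∀ i ≤ p, v ∉ (algMatch f I (lowerLink K f v)).m ((σ i).erase v) := by
      intro i hi h
      obtain ⟨τ, hτ, hvτ⟩ := (Mlem f I hI hcomp (lowerLink K f v).card _ le_rfl _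
        (herase i (le_trans hi (Nat.le_succ p)))).2.1 v h
      exact (lowerLink_vert hτ hvτ).2 rfl
    refine ih (lowerLink K f v) ?_ ⟨p, fun i => (σ i).erase v, ?_, ?_, ?_⟩
    · exact Nat.lt_succ_iff.mp (lt_of_lt_of_le (lowerLink_card_lt K f v hL'ne) hK)
    · exact fun i hi => herase i (le_trans hi (Nat.le_succ p))
    · show (σ (p + 1)).erase v = (σ 0).erase v
      rw [hloop]
    · intro i hi
      show (σ (i + 1)).erase v ≠ (σ i).erase v ∧
        (σ (i + 1)).erase v ⊆ (algMatch f I (lowerLink K f v)).m ((σ i).erase v) ∧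
        ((σ (i + 1)).erase v).card + 1 =
          ((algMatch f I (lowerLink K f v)).m ((σ i).erase v)).card
      obtain ⟨hnei, hsubi, hcardi⟩ := hstep i hi
      refine ⟨?_, ?_, ?_⟩
      · intro he
        apply hnei
        have e1 : σ (i + 1) = insert v ((σ (i + 1)).erase v) :=
          (Finset.insert_erase (hvmem (i + 1) (Nat.succ_le_succ hi))).symm
        rw [e1, he, Finset.insert_erase (hvmem i (le_trans hi (Nat.le_succ p)))]
      · intro w hw
        rw [Finset.mem_erase] at hw
        have hmw := hsubi hw.2
        rw [hmEq i hi] at hmw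
        rcases Finset.mem_insert.mp hmw with h | h
        · exact absurd h hw.1
        · exact h
      · have e1 : (σ (i + 1)).card = ((σ (i + 1)).erase v).card + 1 :=
          (Finset.card_erase_add_one (hvmem (i + 1) (Nat.succ_le_succ hi))).symm
        have e2 : ((algMatch f I K).m (σ i)).card =
            ((algMatch f I (lowerLink K f v)).m ((σ i).erase v)).card + 1 := by
          rw [hmEq i hi]
          exact Finset.card_insert_of_notMem (hvnotm i hi)
        omega

end Main

/-- the partial matching produced by Algorithm 2 is acyclic: there is
no nontrivial directed cycle σ₀, m σ₀, σ₁, m σ₁, …, σ_p, m σ_p, σ_{p+1} = σ₀ in the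
modified Hasse diagram, where each σ_{i+1} ≠ σ_i is a codimension-one face of m σ_i. -/
theorem stmt16 {V : Type*} [DecidableEq V] [Fintype V] {k : ℕ}
    (K : Finset (Finset V))
    (hne : ∀ σ ∈ K, σ.Nonempty)
    (hdown : ∀ σ ∈ K, ∀ τ, τ ⊆ σ → τ.Nonempty → τ ∈ K)
    (f : V → Fin k → ℝ) (I : V → ℕ) (hI : Function.Injective I)
    (hcomp : ∀ v w : V, f v ≤ f w → f v ≠ f w → I v < I w) :
    ¬ ∃ (p : ℕ) (σ : ℕ → Finset V), (∀ i ≤ p, σ i ∈ (algMatch f I K).A) ∧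
        σ (p + 1) = σ 0 ∧
        ∀ i ≤ p, σ (i + 1) ≠ σ i ∧ σ (i + 1) ⊆ (algMatch f I K).m (σ i) ∧
          (σ (i + 1)).card + 1 = ((algMatch f I K).m (σ i)).card :=
  auxMain f I hI hcomp K.card K le_rfl
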